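/- For every ℓ ≥ 1, the number of (not necessarily contiguous) subsequences of length ℓ of the Peano word X_n all of whose letters are equal is C(4^{n-1}-2^{n-1}, ℓ) + 2·C(4^{n-1}, ℓ) + C(4^{n-1}+2^{n-1}-1, ℓ). -/

import Mathlib

/-- φ1: reverse the word and apply 1↦4, 2↦1, 3↦2, 4↦3. -/
def phi1 (A : List ℕ) : List ℕ := A.reverse.map (fun x => if x = 1 then 4 else x - 1)

/-- φ2: reverse the word and apply 1↦2, 2↦3, 3↦4, 4↦1. -/
def phi2 (A : List ℕ) : List ℕ := A.reverse.map (fun x => if x = 4 then 1 else x + 1)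

/-- The Peano words: `peano 1 = 123`, `peano (n+1) = φ1(Xₙ) 1 Xₙ 2 Xₙ 3 φ2(Xₙ)`. -/
def peano : ℕ → List ℕ
  | 0 => []
  | 1 => [1, 2, 3]
  | n + 2 =>
      phi1 (peano (n + 1)) ++ [1] ++ peano (n + 1) ++ [2] ++ peano (n + 1)
        ++ [3] ++ phi2 (peano (n + 1))

/-- Number of rises of a word. -/
def rises (w : List ℕ) : ℕ := ((w.zip w.tail).filter (fun p => p.1 < p.2)).length

/-- Number of descents of a word. -/
def descents (w : List ℕ) : ℕ := ((w.zip w.tail).filter (fun p => p.2 < p.1)).length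

/-- Number of constant subsequences of length `ℓ`: sets of `ℓ` positions at which
all letters of `w` coincide. -/
def constCount (w : List ℕ) (ℓ : ℕ) : ℕ :=
  (Finset.univ.filter (fun s : Finset (Fin w.length) =>
    s.card = ℓ ∧ ∀ i ∈ s, ∀ j ∈ s, w.get i = w.get j)).card

lemma card_filter_get_eq (w : List ℕ) (a : ℕ) :
    (Finset.univ.filter (fun i : Fin w.length => w.get i = a)).card = w.count a := by
  induction w with
  | nil => simp
  | cons x xs ih =>
    show (Finset.univ.filter
      (fun i : Fin (xs.length + 1) => (x :: xs).get i = a)).card = (x :: xs).count a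
    rw [Fin.card_filter_univ_succ' (fun i : Fin (xs.length + 1) => (x :: xs).get i = a)]
    show (if x = a then 1 else 0)
        + (Finset.univ.filter (fun i : Fin xs.length => xs.get i = a)).card = _
    rw [ih, List.count_cons]
    by_cases h : x = a
    · subst h; simp [add_comm]
    · simp [h, Ne.symm h]

lemma disj_aux (w : List ℕ) (ℓ : ℕ) (hℓ : 1 ≤ ℓ) (u v : ℕ) (huv : u ≠ v) :
    Disjoint ((Finset.univ.filter (fun i : Fin w.length => w.get i = u)).powersetCard ℓ)
      ((Finset.univ.filter (fun i : Fin w.length => w.get i = v)).powersetCard ℓ) := by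
  rw [Finset.disjoint_left]
  intro s hs hs'
  rw [Finset.mem_powersetCard] at hs hs'
  obtain ⟨h1, h2⟩ := hs
  obtain ⟨h1', _⟩ := hs'
  obtain ⟨i, hi⟩ := Finset.card_pos.mp (by omega : 0 < s.card)
  have hu := (Finset.mem_filter.mp (h1 hi)).2
  have hv := (Finset.mem_filter.mp (h1' hi)).2
  exact huv (hu.symm.trans hv)

lemma constCount_eq (w : List ℕ) (hw : ∀ x ∈ w, x = 1 ∨ x = 2 ∨ x = 3 ∨ x = 4)
    (ℓ : ℕ) (hℓ : 1 ≤ ℓ) :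
    constCount w ℓ = (w.count 1).choose ℓ + (w.count 2).choose ℓ
      + (w.count 3).choose ℓ + (w.count 4).choose ℓ := by
  classical
  set S : ℕ → Finset (Fin w.length) :=
    fun v => Finset.univ.filter (fun i => w.get i = v) with hS
  have hset : (Finset.univ.filter (fun s : Finset (Fin w.length) =>
      s.card = ℓ ∧ ∀ i ∈ s, ∀ j ∈ s, w.get i = w.get j)) =
      ((S 1).powersetCard ℓ ∪ (S 2).powersetCard ℓ) ∪
        ((S 3).powersetCard ℓ ∪ (S 4).powersetCard ℓ) := by
    ext s
    simp only [Finset.mem_filter, Finset.mem_union, Finset.mem_powersetCard, Finset.mem_univ,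
      true_and]
    constructor
    · rintro ⟨hcard, hconst⟩
      obtain ⟨i₀, hi₀⟩ := Finset.card_pos.mp (by omega : 0 < s.card)
      have hsub : ∀ v, w.get i₀ = v → s ⊆ S v := by
        intro v hv i hi
        simp only [hS, Finset.mem_filter, Finset.mem_univ, true_and]
        rw [hconst i hi i₀ hi₀, hv]
      have hmem : w.get i₀ ∈ w := w.get_mem i₀
      rcases hw _ hmem with h | h | h | h
      · exact Or.inl (Or.inl ⟨hsub _ h, hcard⟩)
      · exact Or.inl (Or.inr ⟨hsub _ h, hcard⟩)
      · exact Or.inr (Or.inl ⟨hsub _ h, hcard⟩)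
      · exact Or.inr (Or.inr ⟨hsub _ h, hcard⟩)
    · have key : ∀ v, s ⊆ S v ∧ s.card = ℓ →
          s.card = ℓ ∧ ∀ i ∈ s, ∀ j ∈ s, w.get i = w.get j := by
        rintro v ⟨hsub, hcard⟩
        refine ⟨hcard, fun i hi j hj => ?_⟩
        have h1 := (Finset.mem_filter.mp (hsub hi)).2
        have h2 := (Finset.mem_filter.mp (hsub hj)).2
        rw [h1, h2]
      rintro ((h | h) | (h | h))
      · exact key 1 h
      · exact key 2 h
      · exact key 3 h
      · exact key 4 h
  rw [constCount, hset, Finset.card_union_of_disjoint, Finset.card_union_of_disjoint,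
    Finset.card_union_of_disjoint]
  · simp only [Finset.card_powersetCard, hS, card_filter_get_eq]
    ring
  · exact disj_aux w ℓ hℓ 3 4 (by norm_num)
  · exact disj_aux w ℓ hℓ 1 2 (by norm_num)
  · rw [Finset.disjoint_union_left]
    constructor <;> rw [Finset.disjoint_union_right] <;>
      exact ⟨disj_aux w ℓ hℓ _ _ (by norm_num), disj_aux w ℓ hℓ _ _ (by norm_num)⟩

lemma count_map_of (f : ℕ → ℕ) (A : List ℕ) (u v : ℕ)
    (h : ∀ x ∈ A, (f x = v ↔ x = u)) :
    (A.map f).count v = A.count u := by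
  rw [List.count_eq_countP, List.countP_map, List.count_eq_countP]
  apply List.countP_congr
  intro x hx
  simp only [Function.comp, beq_iff_eq]
  exact h x hx

lemma peano_key (n : ℕ) :
    (∀ x ∈ peano (n + 1), x = 1 ∨ x = 2 ∨ x = 3 ∨ x = 4) ∧
    (peano (n + 1)).count 1 = 4 ^ n ∧
    (peano (n + 1)).count 2 = 4 ^ n + 2 ^ n - 1 ∧
    (peano (n + 1)).count 3 = 4 ^ n ∧
    (peano (n + 1)).count 4 = 4 ^ n - 2 ^ n := by
  induction n with
  | zero =>
    refine ⟨?_, ?_, ?_, ?_, ?_⟩ <;> simp [peano]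
  | succ m ih =>
    obtain ⟨hmem, h1, h2, h3, h4⟩ := ih
    set X := peano (m + 1) with hX
    have hphi1 : ∀ v u : ℕ, (∀ x, x = 1 ∨ x = 2 ∨ x = 3 ∨ x = 4 →
        ((if x = 1 then 4 else x - 1) = v ↔ x = u)) → (phi1 X).count v = X.count u := by
      intro v u hvu
      rw [phi1, ← (List.count_reverse : List.count u X.reverse = X.count u)]
      exact count_map_of _ _ u v (fun x hx => hvu x (hmem x (List.mem_reverse.mp hx)))
    have hphi2 : ∀ v u : ℕ, (∀ x, x = 1 ∨ x = 2 ∨ x = 3 ∨ x = 4 →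
        ((if x = 4 then 1 else x + 1) = v ↔ x = u)) → (phi2 X).count v = X.count u := by
      intro v u hvu
      rw [phi2, ← (List.count_reverse : List.count u X.reverse = X.count u)]
      exact count_map_of _ _ u v (fun x hx => hvu x (hmem x (List.mem_reverse.mp hx)))
    have p11 : (phi1 X).count 1 = X.count 2 := hphi1 1 2 (by rintro x (rfl|rfl|rfl|rfl) <;> decide)
    have p12 : (phi1 X).count 2 = X.count 3 := hphi1 2 3 (by rintro x (rfl|rfl|rfl|rfl) <;> decide)
    have p13 : (phi1 X).count 3 = X.count 4 := hphi1 3 4 (by rintro x (rfl|rfl|rfl|rfl) <;> decide)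
    have p14 : (phi1 X).count 4 = X.count 1 := hphi1 4 1 (by rintro x (rfl|rfl|rfl|rfl) <;> decide)
    have p21 : (phi2 X).count 1 = X.count 4 := hphi2 1 4 (by rintro x (rfl|rfl|rfl|rfl) <;> decide)
    have p22 : (phi2 X).count 2 = X.count 1 := hphi2 2 1 (by rintro x (rfl|rfl|rfl|rfl) <;> decide)
    have p23 : (phi2 X).count 3 = X.count 2 := hphi2 3 2 (by rintro x (rfl|rfl|rfl|rfl) <;> decide)
    have p24 : (phi2 X).count 4 = X.count 3 := hphi2 4 3 (by rintro x (rfl|rfl|rfl|rfl) <;> decide)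
    have hle : 2 ^ m ≤ 4 ^ m := Nat.pow_le_pow_left (by norm_num) m
    have hone : 1 ≤ 2 ^ m := Nat.one_le_two_pow
    have hpe : peano (m + 2) = phi1 X ++ [1] ++ X ++ [2] ++ X ++ [3] ++ phi2 X := rfl
    have hmem' : ∀ x ∈ peano (m + 1 + 1), x = 1 ∨ x = 2 ∨ x = 3 ∨ x = 4 := by
      intro x hx
      rw [show m + 1 + 1 = m + 2 from rfl, hpe] at hx
      simp only [List.mem_append, List.mem_singleton, phi1, phi2, List.mem_map,
        List.mem_reverse] at hx
      rcases hx with ((((((hx | rfl) | hx) | rfl) | hx) | rfl) | hx)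
      · obtain ⟨y, hy, rfl⟩ := hx
        rcases hmem y hy with rfl | rfl | rfl | rfl <;> simp
      · simp
      · exact hmem x hx
      · simp
      · exact hmem x hx
      · simp
      · obtain ⟨y, hy, rfl⟩ := hx
        rcases hmem y hy with rfl | rfl | rfl | rfl <;> simp
    refine ⟨hmem', ?_, ?_, ?_, ?_⟩ <;>
      · rw [show m + 1 + 1 = m + 2 from rfl, hpe]
        simp only [List.count_append, p11, p12, p13, p14, p21, p22, p23, p24, h1, h2, h3, h4,
          pow_succ]
        norm_num [List.count_cons, List.count_nil]
        omega

theorem peano_constCount (n : ℕ) (hn : 1 ≤ n) (ℓ : ℕ) (hℓ : 1 ≤ ℓ) :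
    constCount (peano n) ℓ =
      Nat.choose (4 ^ (n - 1) - 2 ^ (n - 1)) ℓ + 2 * Nat.choose (4 ^ (n - 1)) ℓ
        + Nat.choose (4 ^ (n - 1) + 2 ^ (n - 1) - 1) ℓ := by
  obtain ⟨m, rfl⟩ := Nat.exists_eq_add_of_le hn
  obtain ⟨hmem, h1, h2, h3, h4⟩ := peano_key m
  rw [show 1 + m = m + 1 by omega] at *
  rw [constCount_eq _ hmem ℓ hℓ, h1, h2, h3, h4, Nat.add_sub_cancel]
  ring
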